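/- arXiv:1102.0426 — 2 statements merged into one kernel-verified Lean document; each statement's English description precedes it below -/
import Mathlib

section
/- With D a non-Lagrangian 2-distribution on U spanned by a normalized frame X, Y (Ω(X,Y) = 1), P, P' the projector fields onto D and D', Z := P'([X,Y]), and ω the 2-form ω(u,v) = ½(Ω(Pu,v) + Ω(u,Pv)): for all smooth vector fields A, B on U, the curvature R(A,B) := P'([P(A), P(B)]) satisfies R(A,B) = ω(A,B)·Z pointwise; in particular R is skew-symmetric and C∞(U)-bilinear in A and B. -/
noncomputable section

/-- Vectors of `ℝ⁴`, with coordinates `(x,p,y,q) = (v 0, v 1, v 2, v 3)`. -/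
abbrev Vec : Type := Fin 4 → ℝ

/-- The standard symplectic form `Ω = dp∧dx + dq∧dy` on `ℝ⁴`. -/
def Omega (u v : Vec) : ℝ := u 1 * v 0 - u 0 * v 1 + u 3 * v 2 - u 2 * v 3

/-- Lie bracket of vector fields. -/
def vbracket (X Y : Vec → Vec) : Vec → Vec :=
  fun x => fderiv ℝ Y x (X x) - fderiv ℝ X x (Y x)

/-- The curvature `R(A,B) := P'([P(A),P(B)])` of the distribution with projector
field `P` (here `P' = id − P`). -/
def curv (P : Vec → Vec →L[ℝ] Vec) (A B : Vec → Vec) : Vec → Vec :=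
  fun x => vbracket (fun y => P y (A y)) (fun y => P y (B y)) x
    - P x (vbracket (fun y => P y (A y)) (fun y => P y (B y)) x)

lemma Omega_skew (u v : Vec) : Omega u v = -Omega v u := by simp [Omega]; ring

lemma Omega_add_left (u v w : Vec) : Omega (u + v) w = Omega u w + Omega v w := by
  simp [Omega]; ring

lemma Omega_add_right (u v w : Vec) : Omega u (v + w) = Omega u v + Omega u w := by
  simp [Omega]; ring

lemma Omega_smul_left (r : ℝ) (u w : Vec) : Omega (r • u) w = r * Omega u w := by
  simp [Omega]; ring

lemma Omega_smul_right (r : ℝ) (u w : Vec) : Omega u (r • w) = r * Omega u w := by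
  simp [Omega]; ring

lemma Omega_self (u : Vec) : Omega u u = 0 := by simp [Omega]; ring

/-- Decomposition of any vector in the symplectic frame. -/
lemma decomp (X Y X' Y' : Vec) (hXY : Omega X Y = 1) (hX'Y' : Omega X' Y' = 1)
    (h1 : Omega X X' = 0) (h2 : Omega X Y' = 0) (h3 : Omega Y X' = 0) (h4 : Omega Y Y' = 0)
    (v : Vec) :
    v = Omega v Y • X + Omega X v • Y + Omega v Y' • X' + Omega X' v • Y' := by
  have hYX : Omega Y X = -1 := by rw [Omega_skew, hXY]
  have hY'X' : Omega Y' X' = -1 := by rw [Omega_skew, hX'Y']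
  have h1' : Omega X' X = 0 := by rw [Omega_skew, h1]; ring
  have h2' : Omega Y' X = 0 := by rw [Omega_skew, h2]; ring
  have h3' : Omega X' Y = 0 := by rw [Omega_skew, h3]; ring
  have h4' : Omega Y' Y = 0 := by rw [Omega_skew, h4]; ring
  set b : Fin 4 → Vec := ![X, Y, X', Y'] with hb
  have hli : LinearIndependent ℝ b := by
    rw [Fintype.linearIndependent_iff]
    intro g hg
    rw [Fin.sum_univ_four] at hg
    have e0 : Omega (g 0 • b 0 + g 1 • b 1 + g 2 • b 2 + g 3 • b 3) Y = g 0 := by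
      simp [hb, Omega_add_left, Omega_smul_left, Omega_self, hYX, h3', h4', hXY]
    have e1 : Omega X (g 0 • b 0 + g 1 • b 1 + g 2 • b 2 + g 3 • b 3) = g 1 := by
      simp [hb, Omega_add_right, Omega_smul_right, Omega_self, hXY, h1, h2]
    have e2 : Omega (g 0 • b 0 + g 1 • b 1 + g 2 • b 2 + g 3 • b 3) Y' = g 2 := by
      simp [hb, Omega_add_left, Omega_smul_left, Omega_self, h2, h4, hX'Y']
    have e3 : Omega X' (g 0 • b 0 + g 1 • b 1 + g 2 • b 2 + g 3 • b 3) = g 3 := by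
      simp [hb, Omega_add_right, Omega_smul_right, Omega_self, h1', h3', hX'Y']
    rw [hg] at e0 e1 e2 e3
    simp [Omega] at e0 e1 e2 e3
    intro i
    fin_cases i <;> simp [← e0, ← e1, ← e2, ← e3]
  have hcard : Fintype.card (Fin 4) = Module.finrank ℝ Vec := by simp
  let B : Module.Basis (Fin 4) ℝ Vec := basisOfLinearIndependentOfCardEqFinrank hli hcard
  have hBi : ∀ i, B i = b i := fun i => by
    simp [B, coe_basisOfLinearIndependentOfCardEqFinrank]
  have hv := B.sum_repr v
  rw [Fin.sum_univ_four, hBi 0, hBi 1, hBi 2, hBi 3] at hv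
  set r : Fin 4 → ℝ := fun i => B.repr v i with hr
  have hv' : r 0 • X + r 1 • Y + r 2 • X' + r 3 • Y' = v := hv
  have c0 : Omega v Y = r 0 := by
    rw [← hv']
    simp [Omega_add_left, Omega_smul_left, Omega_self, hYX, h3', h4', hXY]
  have c1 : Omega X v = r 1 := by
    rw [← hv']
    simp [Omega_add_right, Omega_smul_right, Omega_self, hXY, h1, h2]
  have c2 : Omega v Y' = r 2 := by
    rw [← hv']
    simp [Omega_add_left, Omega_smul_left, Omega_self, h2, h4, hX'Y']
  have c3 : Omega X' v = r 3 := by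
    rw [← hv']
    simp [Omega_add_right, Omega_smul_right, Omega_self, h1', h3', hX'Y']
  rw [c0, c1, c2, c3, hv']

lemma diffAt_omega {A B : Vec → Vec} {x : Vec} (hA : DifferentiableAt ℝ A x)
    (hB : DifferentiableAt ℝ B x) :
    DifferentiableAt ℝ (fun y => Omega (A y) (B y)) x := by
  have hAi : ∀ i, DifferentiableAt ℝ (fun y => A y i) x := fun i =>
    (differentiableAt_pi.mp hA) i
  have hBi : ∀ i, DifferentiableAt ℝ (fun y => B y i) x := fun i =>
    (differentiableAt_pi.mp hB) i
  simp only [Omega]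
  exact ((((hAi 1).mul (hBi 0)).sub ((hAi 0).mul (hBi 1))).add
    ((hAi 3).mul (hBi 2))).sub ((hAi 2).mul (hBi 3))

/-- for a non-Lagrangian 2-distribution `D = ⟨X,Y⟩` (normalized by
`Ω(X,Y) = 1`) with Ω-orthogonal complement `D' = ⟨X',Y'⟩` and projector field `P`,
the curvature satisfies `R(A,B) = ω(A,B)·Z` pointwise; in particular it is
skew-symmetric and `C^∞(U)`-bilinear. -/
theorem stmt_3
    (U : Set Vec) (hU : IsOpen U)
    (X Y X' Y' : Vec → Vec) (P : Vec → Vec →L[ℝ] Vec)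
    (hX : ContDiffOn ℝ (⊤ : ℕ∞) X U) (hY : ContDiffOn ℝ (⊤ : ℕ∞) Y U)
    (hX' : ContDiffOn ℝ (⊤ : ℕ∞) X' U) (hY' : ContDiffOn ℝ (⊤ : ℕ∞) Y' U)
    (hP : ContDiffOn ℝ (⊤ : ℕ∞) P U)
    (hXY : ∀ x ∈ U, Omega (X x) (Y x) = 1)
    (hX'Y' : ∀ x ∈ U, Omega (X' x) (Y' x) = 1)
    (horth : ∀ x ∈ U, Omega (X x) (X' x) = 0 ∧ Omega (X x) (Y' x) = 0 ∧
      Omega (Y x) (X' x) = 0 ∧ Omega (Y x) (Y' x) = 0)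
    (hProj : ∀ x ∈ U, P x (X x) = X x ∧ P x (Y x) = Y x ∧
      P x (X' x) = 0 ∧ P x (Y' x) = 0)
    (Z : Vec → Vec)
    (hZ : Z = fun x => vbracket X Y x - P x (vbracket X Y x))
    (ω : Vec → Vec → Vec → ℝ)
    (hω : ω = fun x u v => (Omega (P x u) v + Omega u (P x v)) / 2) :
    ∀ A B : Vec → Vec, ContDiffOn ℝ (⊤ : ℕ∞) A U → ContDiffOn ℝ (⊤ : ℕ∞) B U →
      ∀ x ∈ U,
        curv P A B x = ω x (A x) (B x) • Z x ∧
        curv P A B x = -curv P B A x ∧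
        (∀ f : Vec → ℝ, ContDiffOn ℝ (⊤ : ℕ∞) f U →
          curv P (fun y => f y • A y) B x = f x • curv P A B x ∧
          curv P A (fun y => f y • B y) x = f x • curv P A B x) ∧
        (∀ C : Vec → Vec, ContDiffOn ℝ (⊤ : ℕ∞) C U →
          curv P (fun y => A y + C y) B x = curv P A B x + curv P C B x ∧
          curv P A (fun y => B y + C y) x = curv P A B x + curv P A C x) := by
  -- The projector is given by symplectic pairing with the frame.
  have hPform : ∀ y ∈ U, ∀ v : Vec,
      P y v = Omega v (Y y) • X y + Omega (X y) v • Y y := by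
    intro y hy v
    obtain ⟨o1, o2, o3, o4⟩ := horth y hy
    obtain ⟨p1, p2, p3, p4⟩ := hProj y hy
    have hd := decomp (X y) (Y y) (X' y) (Y' y) (hXY y hy) (hX'Y' y hy) o1 o2 o3 o4 v
    calc P y v
        = P y (Omega v (Y y) • X y + Omega (X y) v • Y y
            + Omega v (Y' y) • X' y + Omega (X' y) v • Y' y) := by rw [← hd]
      _ = Omega v (Y y) • X y + Omega (X y) v • Y y := by
          simp [map_add, map_smul, p1, p2, p3, p4]
  -- The key curvature formula, for arbitrary smooth fields.
  have key : ∀ A B : Vec → Vec, ContDiffOn ℝ (⊤ : ℕ∞) A U → ContDiffOn ℝ (⊤ : ℕ∞) B U →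
      ∀ x ∈ U, curv P A B x =
        (Omega (A x) (Y x) * Omega (X x) (B x)
          - Omega (X x) (A x) * Omega (B x) (Y x)) • Z x := by
    intro A B hA hB x hx
    have hmem : U ∈ nhds x := hU.mem_nhds hx
    have dX : DifferentiableAt ℝ X x := (hX.contDiffAt hmem).differentiableAt (by simp)
    have dY : DifferentiableAt ℝ Y x := (hY.contDiffAt hmem).differentiableAt (by simp)
    have dA : DifferentiableAt ℝ A x := (hA.contDiffAt hmem).differentiableAt (by simp)
    have dB : DifferentiableAt ℝ B x := (hB.contDiffAt hmem).differentiableAt (by simp)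
    have ha : DifferentiableAt ℝ (fun y => Omega (A y) (Y y)) x := diffAt_omega dA dY
    have hb : DifferentiableAt ℝ (fun y => Omega (X y) (A y)) x := diffAt_omega dX dA
    have hc : DifferentiableAt ℝ (fun y => Omega (B y) (Y y)) x := diffAt_omega dB dY
    have he : DifferentiableAt ℝ (fun y => Omega (X y) (B y)) x := diffAt_omega dX dB
    have hEqA : (fun y => P y (A y)) =ᶠ[nhds x]
        (fun y => Omega (A y) (Y y) • X y + Omega (X y) (A y) • Y y) := by
      filter_upwards [hmem] with y hy
      exact hPform y hy (A y)
    have hEqB : (fun y => P y (B y)) =ᶠ[nhds x]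
        (fun y => Omega (B y) (Y y) • X y + Omega (X y) (B y) • Y y) := by
      filter_upwards [hmem] with y hy
      exact hPform y hy (B y)
    have hfA : fderiv ℝ (fun y => P y (A y)) x =
        (Omega (A x) (Y x) • fderiv ℝ X x
          + (fderiv ℝ (fun y => Omega (A y) (Y y)) x).smulRight (X x))
        + (Omega (X x) (A x) • fderiv ℝ Y x
          + (fderiv ℝ (fun y => Omega (X y) (A y)) x).smulRight (Y x)) := by
      rw [hEqA.fderiv_eq, fderiv_fun_add (f := fun y => Omega (A y) (Y y) • X y)
        (g := fun y => Omega (X y) (A y) • Y y) (ha.smul dX) (hb.smul dY),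
        fderiv_fun_smul ha dX, fderiv_fun_smul hb dY]
    have hfB : fderiv ℝ (fun y => P y (B y)) x =
        (Omega (B x) (Y x) • fderiv ℝ X x
          + (fderiv ℝ (fun y => Omega (B y) (Y y)) x).smulRight (X x))
        + (Omega (X x) (B x) • fderiv ℝ Y x
          + (fderiv ℝ (fun y => Omega (X y) (B y)) x).smulRight (Y x)) := by
      rw [hEqB.fderiv_eq, fderiv_fun_add (f := fun y => Omega (B y) (Y y) • X y)
        (g := fun y => Omega (X y) (B y) • Y y) (hc.smul dX) (he.smul dY),
        fderiv_fun_smul hc dX, fderiv_fun_smul he dY]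
    have hPAx : P x (A x) = Omega (A x) (Y x) • X x + Omega (X x) (A x) • Y x :=
      hPform x hx (A x)
    have hPBx : P x (B x) = Omega (B x) (Y x) • X x + Omega (X x) (B x) • Y x :=
      hPform x hx (B x)
    obtain ⟨p1, p2, p3, p4⟩ := hProj x hx
    simp only [curv, vbracket]
    rw [hfA, hfB, hPAx, hPBx, hZ]
    simp only [vbracket, ContinuousLinearMap.add_apply, ContinuousLinearMap.smul_apply,
      ContinuousLinearMap.coe_smul', Pi.smul_apply, ContinuousLinearMap.smulRight_apply,
      map_add, map_smul, map_sub, p1, p2]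
    module
  -- Value of ω in terms of the pairings.
  have hval : ∀ y ∈ U, ∀ u v : Vec, ω y u v =
      Omega u (Y y) * Omega (X y) v - Omega (X y) u * Omega v (Y y) := by
    intro y hy u v
    rw [hω]
    simp only
    rw [hPform y hy u, hPform y hy v]
    simp only [Omega, Pi.add_apply, Pi.smul_apply, smul_eq_mul]
    ring
  intro A B hA hB x hx
  refine ⟨?_, ?_, ?_, ?_⟩
  · rw [key A B hA hB x hx, hval x hx (A x) (B x)]
  · rw [key A B hA hB x hx, key B A hB hA x hx]
    module
  · intro f hf
    constructor
    · rw [key (fun y => f y • A y) B (hf.smul hA) hB x hx, key A B hA hB x hx]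
      simp only [Omega_smul_left, Omega_smul_right]
      module
    · rw [key A (fun y => f y • B y) hA (hf.smul hB) x hx, key A B hA hB x hx]
      simp only [Omega_smul_left, Omega_smul_right]
      module
  · intro C hC
    constructor
    · rw [key (fun y => A y + C y) B (hA.add hC) hB x hx, key A B hA hB x hx,
        key C B hC hB x hx]
      simp only [Omega_add_left, Omega_add_right]
      module
    · rw [key A (fun y => B y + C y) hA (hB.add hC) x hx, key A B hA hB x hx,
        key A C hA hC x hx]
      simp only [Omega_add_left, Omega_add_right]
      module
end
end

section
/- Let V be a 4-dimensional real vector space, Ω a nondegenerate alternating bilinear form on V, D ⊆ V a 2-dimensional subspace on which Ω restricts to a nonzero form, D^⊥ its Ω-orthogonal complement, P the projection onto D along D^⊥, ω the 2-form ω(u,v) = ½(Ω(Pu,v) + Ω(u,Pv)) and ω' := Ω − ω. Then for any vectors z ∈ D^⊥ and z' ∈ D, setting ρ := ι_z Ω, ρ' := ι_{z'} Ω and σ := ρ − ρ', one has ω ∧ ρ − ω' ∧ ρ' = Ω ∧ σ. (Equivalently, with R = ω ⊗ z and R' = ω' ⊗ z', (R − R') ⌟ Ω = (z − z') ⌟ ½(Ω∧Ω).)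 -/
noncomputable section

/-- The Ω-orthogonal complement `D^⊥ = {v ∈ V : Ω(v,d) = 0 for all d ∈ D}`. -/
def sympPerp {V : Type*} [AddCommGroup V] [Module ℝ V]
    (Ω : V →ₗ[ℝ] V →ₗ[ℝ] ℝ) (D : Submodule ℝ V) : Submodule ℝ V where
  carrier := {v | ∀ d ∈ D, Ω v d = 0}
  add_mem' := by
    intro a b ha hb d hd
    simp [map_add, ha d hd, hb d hd]
  zero_mem' := by
    intro d hd
    simp
  smul_mem' := by
    intro c a ha d hd
    simp [map_smul, ha d hd]

/-- Wedge product of a 2-form with a 1-form (on values). -/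
def w21 {V : Type*} (b : V → V → ℝ) (t : V → ℝ) : V → V → V → ℝ :=
  fun u v w => b u v * t w - b u w * t v + b v w * t u

/-- An alternating bilinear form is skew. -/
lemma skew_of_alt {V : Type*} [AddCommGroup V] [Module ℝ V]
    (Ω : V →ₗ[ℝ] V →ₗ[ℝ] ℝ) (hAlt : ∀ v, Ω v v = 0) (u v : V) :
    Ω u v = -Ω v u := by
  have h := hAlt (u + v)
  simp only [map_add, LinearMap.add_apply, hAlt] at h
  linarith

/-- A "3-form built from a 2-form and a 1-form" vanishes on a ≤2-dimensional
subspace. -/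
lemma triVanish {V : Type*} [AddCommGroup V] [Module ℝ V] [FiniteDimensional ℝ V]
    (Ω : V →ₗ[ℝ] V →ₗ[ℝ] ℝ) (hAlt : ∀ v, Ω v v = 0)
    (W : Submodule ℝ V) (hW : Module.finrank ℝ W ≤ 2)
    (a b c zz : V) (ha : a ∈ W) (hb : b ∈ W) (hc : c ∈ W) (hzz : zz ∈ W) :
    Ω a b * Ω zz c - Ω a c * Ω zz b + Ω b c * Ω zz a = 0 := by
  have hdep : ¬ LinearIndependent ℝ (![(⟨a, ha⟩ : W), ⟨b, hb⟩, ⟨c, hc⟩]) := by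
    intro h
    have := h.fintype_card_le_finrank
    simp only [Fintype.card_fin] at this
    omega
  rw [Fintype.not_linearIndependent_iff] at hdep
  obtain ⟨g, hg, i, hi⟩ := hdep
  have hg' : g 0 • a + g 1 • b + g 2 • c = 0 := by
    have := congrArg (Subtype.val) hg
    simpa [Fin.sum_univ_three] using this
  have hba : Ω b a = -Ω a b := skew_of_alt Ω hAlt b a
  have hca : Ω c a = -Ω a c := skew_of_alt Ω hAlt c a
  have hcb : Ω c b = -Ω b c := skew_of_alt Ω hAlt c b
  fin_cases i
  · -- a = s • b + t • c
    have h0 : g 0 ≠ 0 := hi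
    have hane : a = (-(g 1 / g 0)) • b + (-(g 2 / g 0)) • c := by
      apply smul_right_injective V h0
      show g 0 • a = g 0 • ((-(g 1 / g 0)) • b + (-(g 2 / g 0)) • c)
      have e1 : g 0 • ((-(g 1 / g 0)) • b + (-(g 2 / g 0)) • c)
          = (-(g 1)) • b + (-(g 2)) • c := by
        rw [smul_add, smul_smul, smul_smul]
        congr 2 <;> field_simp <;> ring
      have e2 : g 0 • a - ((-(g 1)) • b + (-(g 2)) • c)
          = g 0 • a + g 1 • b + g 2 • c := by
        rw [neg_smul, neg_smul]; abel
      rw [e1, ← sub_eq_zero, e2, hg']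
    rw [hane]
    simp only [map_add, map_smul, LinearMap.add_apply, LinearMap.smul_apply,
      smul_eq_mul, hAlt, hba, hca, hcb]
    ring
  · -- b = s • a + t • c
    have h0 : g 1 ≠ 0 := hi
    have hbne : b = (-(g 0 / g 1)) • a + (-(g 2 / g 1)) • c := by
      apply smul_right_injective V h0
      show g 1 • b = g 1 • ((-(g 0 / g 1)) • a + (-(g 2 / g 1)) • c)
      have e1 : g 1 • ((-(g 0 / g 1)) • a + (-(g 2 / g 1)) • c)
          = (-(g 0)) • a + (-(g 2)) • c := by
        rw [smul_add, smul_smul, smul_smul]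
        congr 2 <;> field_simp <;> ring
      have e2 : g 1 • b - ((-(g 0)) • a + (-(g 2)) • c)
          = g 0 • a + g 1 • b + g 2 • c := by
        rw [neg_smul, neg_smul]; abel
      rw [e1, ← sub_eq_zero, e2, hg']
    rw [hbne]
    simp only [map_add, map_smul, LinearMap.add_apply, LinearMap.smul_apply,
      smul_eq_mul, hAlt, hba, hca, hcb]
    ring
  · -- c = s • a + t • b
    have h0 : g 2 ≠ 0 := hi
    have hcne : c = (-(g 0 / g 2)) • a + (-(g 1 / g 2)) • b := by
      apply smul_right_injective V h0
      show g 2 • c = g 2 • ((-(g 0 / g 2)) • a + (-(g 1 / g 2)) • b)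
      have e1 : g 2 • ((-(g 0 / g 2)) • a + (-(g 1 / g 2)) • b)
          = (-(g 0)) • a + (-(g 1)) • b := by
        rw [smul_add, smul_smul, smul_smul]
        congr 2 <;> field_simp <;> ring
      have e2 : g 2 • c - ((-(g 0)) • a + (-(g 1)) • b)
          = g 0 • a + g 1 • b + g 2 • c := by
        rw [neg_smul, neg_smul]; abel
      rw [e1, ← sub_eq_zero, e2, hg']
    rw [hcne]
    simp only [map_add, map_smul, LinearMap.add_apply, LinearMap.smul_apply,
      smul_eq_mul, hAlt, hba, hca, hcb]
    ring

/-- with `ω(u,v) = ½(Ω(Pu,v) + Ω(u,Pv))`, `ω' = Ω − ω`, and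
`ρ = ι_z Ω`, `ρ' = ι_{z'} Ω`, `σ = ρ − ρ'` for `z ∈ D^⊥`, `z' ∈ D`, one has
`ω ∧ ρ − ω' ∧ ρ' = Ω ∧ σ` as 3-forms. -/
theorem stmt_5 {V : Type*} [AddCommGroup V] [Module ℝ V] [FiniteDimensional ℝ V]
    (hdim : Module.finrank ℝ V = 4)
    (Ω : V →ₗ[ℝ] V →ₗ[ℝ] ℝ)
    (hAlt : ∀ v, Ω v v = 0)
    (hNondeg : ∀ v, (∀ w, Ω v w = 0) → v = 0)
    (D : Submodule ℝ V) (hD : Module.finrank ℝ D = 2)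
    (hNL : ∃ u ∈ D, ∃ v ∈ D, Ω u v ≠ 0)
    (P : V →ₗ[ℝ] V)
    (hP1 : ∀ v ∈ D, P v = v) (hP2 : ∀ v ∈ sympPerp Ω D, P v = 0)
    (z z' : V) (hz : z ∈ sympPerp Ω D) (hz' : z' ∈ D)
    (ω ω' : V → V → ℝ) (ρ ρ' σ : V → ℝ)
    (hω : ω = fun u v => (Ω (P u) v + Ω u (P v)) / 2)
    (hω' : ω' = fun u v => Ω u v - ω u v)
    (hρ : ρ = fun u => Ω z u)
    (hρ' : ρ' = fun u => Ω z' u)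
    (hσ : σ = fun u => ρ u - ρ' u) :
    ∀ u v w : V,
      w21 ω ρ u v w - w21 ω' ρ' u v w = w21 (fun a b => Ω a b) σ u v w := by
  have hskew : ∀ u v, Ω u v = -Ω v u := skew_of_alt Ω hAlt
  -- sympPerp = BilinForm.orthogonal
  have hperp_eq : sympPerp Ω D = LinearMap.BilinForm.orthogonal Ω D := by
    ext x
    constructor
    · intro hx d hd
      have := hx d hd
      simpa [LinearMap.BilinForm.IsOrtho, hskew d x] using this
    · intro hx d hd
      have := hx d hd
      rw [hskew x d, this, neg_zero]
  have hrefl : LinearMap.BilinForm.IsRefl Ω := by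
    intro x y h
    rw [hskew y x, h, neg_zero]
  have hnd : LinearMap.BilinForm.Nondegenerate Ω :=
    ⟨hNondeg, fun y hy => hNondeg y (fun w => by rw [hskew, hy w, neg_zero])⟩
  -- finrank of perp is 2
  have hperp_rank : Module.finrank ℝ (sympPerp Ω D) = 2 := by
    rw [hperp_eq, LinearMap.BilinForm.finrank_orthogonal hnd D, hdim, hD]
  -- D ⊓ perp = ⊥
  have hmeet : D ⊓ sympPerp Ω D = ⊥ := by
    obtain ⟨e, he, f, hf, hef⟩ := hNL
    rw [eq_bot_iff]
    rintro x ⟨hxD, hxP⟩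
    -- e, f independent, span D; x ∈ D with Ω x d = 0 for all d ∈ D
    have hind : LinearIndependent ℝ ![e, f] := by
      rw [LinearIndependent.pair_iff]
      intro s t hst
      by_contra hc
      push_neg at hc
      rcases eq_or_ne s 0 with hs | hs
      · have ht : t ≠ 0 := by tauto
        have : t • f = 0 := by rw [← hst, hs]; simp
        have hf0 : f = 0 := by
          have := smul_eq_zero.mp this
          tauto
        apply hef; rw [hf0]; simp
      · have : Ω (s • e + t • f) f = 0 := by rw [hst]; simp
        simp only [map_add, map_smul, LinearMap.add_apply, LinearMap.smul_apply,
          smul_eq_mul, hAlt] at this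
        have : s * Ω e f = 0 := by linarith
        rcases mul_eq_zero.mp this with h | h
        · exact hs h
        · exact hef h
    -- span {e,f} = D
    have hspan : Submodule.span ℝ {e, f} = D := by
      apply Submodule.eq_of_le_of_finrank_le
      · rw [Submodule.span_le]
        rintro y (rfl | rfl) <;> assumption
      · rw [hD]
        have : LinearIndependent ℝ (fun i : Fin 2 => (![e, f] : Fin 2 → V) i) := hind
        have h2 : Module.finrank ℝ (Submodule.span ℝ (Set.range ![e, f])) = 2 := by
          rw [finrank_span_eq_card this]; simp
        have hr : (Set.range ![e, f]) = {e, f} := by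
          ext y; simp [Matrix.range_cons, Matrix.range_empty, or_comm]
        rw [← hr] at *
        omega
    -- x ∈ D; write x in terms of e f
    have hxspan : x ∈ Submodule.span ℝ ({e, f} : Set V) := by rw [hspan]; exact hxD
    rw [Submodule.mem_span_pair] at hxspan
    obtain ⟨s, t, rfl⟩ := hxspan
    have h1 : Ω (s • e + t • f) e = 0 := hxP e he
    have h2 : Ω (s • e + t • f) f = 0 := hxP f hf
    simp only [map_add, map_smul, LinearMap.add_apply, LinearMap.smul_apply,
      smul_eq_mul, hAlt, hskew f e] at h1 h2
    have hs : s = 0 := by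
      have : s * Ω e f = 0 := by linarith
      rcases mul_eq_zero.mp this with h | h
      · exact h
      · exact absurd h hef
    have ht : t = 0 := by
      have : t * Ω e f = 0 := by
        have := h1; nlinarith [h1]
      rcases mul_eq_zero.mp this with h | h
      · exact h
      · exact absurd h hef
    rw [hs, ht]; simp
  -- D ⊔ perp = ⊤
  have hsup : D ⊔ sympPerp Ω D = ⊤ := by
    apply Submodule.eq_top_of_finrank_eq
    have := Submodule.finrank_sup_add_finrank_inf_eq D (sympPerp Ω D)
    rw [hmeet] at this
    simp only [finrank_bot] at this
    omega
  -- decomposition facts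
  have hdecomp : ∀ x : V, P x ∈ D ∧ x - P x ∈ sympPerp Ω D := by
    intro x
    have hx : x ∈ D ⊔ sympPerp Ω D := by rw [hsup]; trivial
    rw [Submodule.mem_sup] at hx
    obtain ⟨d, hd, p, hp, rfl⟩ := hx
    have : P (d + p) = d := by rw [map_add, hP1 d hd, hP2 p hp, add_zero]
    rw [this]
    constructor
    · exact hd
    · simpa using hp
  -- the key pointwise formulas
  have hωf : ∀ u v, ω u v = Ω (P u) (P v) := by
    intro u v
    have h1 : Ω (P u) v = Ω (P u) (P v) := by
      have : Ω (P u) (v - P v) = 0 := by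
        rw [hskew]
        rw [(hdecomp v).2 (P u) (hdecomp u).1, neg_zero]
      have hv : v = P v + (v - P v) := by abel
      calc Ω (P u) v = Ω (P u) (P v + (v - P v)) := by rw [← hv]
        _ = Ω (P u) (P v) + Ω (P u) (v - P v) := by rw [map_add]
        _ = Ω (P u) (P v) := by rw [this, add_zero]
    have h2 : Ω u (P v) = Ω (P u) (P v) := by
      have : Ω (u - P u) (P v) = 0 := (hdecomp u).2 (P v) (hdecomp v).1
      have hu : u = P u + (u - P u) := by abel
      calc Ω u (P v) = Ω (P u + (u - P u)) (P v) := by rw [← hu]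
        _ = Ω (P u) (P v) + Ω (u - P u) (P v) := by rw [map_add, LinearMap.add_apply]
        _ = Ω (P u) (P v) := by rw [this, add_zero]
    rw [hω]; simp only; rw [h1, h2]; ring
  have hρf : ∀ u, ρ u = Ω z (u - P u) := by
    intro u
    have h0 : Ω z (P u) = 0 := hz (P u) (hdecomp u).1
    have hu : u = P u + (u - P u) := by abel
    rw [hρ]; simp only
    calc Ω z u = Ω z (P u + (u - P u)) := by rw [← hu]
      _ = Ω z (P u) + Ω z (u - P u) := by rw [map_add]
      _ = Ω z (u - P u) := by rw [h0, zero_add]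
  have hρ'f : ∀ u, ρ' u = Ω z' (P u) := by
    intro u
    have h0 : Ω z' (u - P u) = 0 := by
      rw [hskew, (hdecomp u).2 z' hz', neg_zero]
    have hu : u = P u + (u - P u) := by abel
    rw [hρ']; simp only
    calc Ω z' u = Ω z' (P u + (u - P u)) := by rw [← hu]
      _ = Ω z' (P u) + Ω z' (u - P u) := by rw [map_add]
      _ = Ω z' (P u) := by rw [h0, add_zero]
  have hΩsplit : ∀ u v, Ω u v = Ω (P u) (P v) + Ω (u - P u) (v - P v) := by
    intro u v
    have c1 : Ω (P u) (v - P v) = 0 := by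
      rw [hskew]; rw [(hdecomp v).2 (P u) (hdecomp u).1, neg_zero]
    have c2 : Ω (u - P u) (P v) = 0 := (hdecomp u).2 (P v) (hdecomp v).1
    have hu : u = P u + (u - P u) := by abel
    have hv : v = P v + (v - P v) := by abel
    calc Ω u v = Ω (P u + (u - P u)) (P v + (v - P v)) := by rw [← hu, ← hv]
      _ = Ω (P u) (P v) + Ω (P u) (v - P v) + (Ω (u - P u) (P v)
            + Ω (u - P u) (v - P v)) := by
          simp only [map_add, LinearMap.add_apply]; ring
      _ = Ω (P u) (P v) + Ω (u - P u) (v - P v) := by rw [c1, c2]; ring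
  have hω'f : ∀ u v, ω' u v = Ω (u - P u) (v - P v) := by
    intro u v
    rw [hω']; simp only
    rw [hωf, hΩsplit u v]; ring
  have hσf : ∀ u, σ u = Ω z (u - P u) - Ω z' (P u) := by
    intro u
    rw [hσ]; simp only [hρf, hρ'f]
  intro u v w
  -- trilinear vanishing on D (vectors Pu, Pv, Pw, z')
  have hT1 : Ω (P u) (P v) * Ω z' (P w) - Ω (P u) (P w) * Ω z' (P v)
      + Ω (P v) (P w) * Ω z' (P u) = 0 :=
    triVanish Ω hAlt D (by omega) _ _ _ _ (hdecomp u).1 (hdecomp v).1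
      (hdecomp w).1 hz'
  have hT2 : Ω (u - P u) (v - P v) * Ω z (w - P w)
      - Ω (u - P u) (w - P w) * Ω z (v - P v)
      + Ω (v - P v) (w - P w) * Ω z (u - P u) = 0 :=
    triVanish Ω hAlt (sympPerp Ω D) (by omega) _ _ _ _ (hdecomp u).2
      (hdecomp v).2 (hdecomp w).2 hz
  simp only [w21, hωf, hω'f, hρf, hρ'f, hσf, hΩsplit u v, hΩsplit u w, hΩsplit v w]
  linear_combination hT1 - hT2
end
end
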